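/- There is no group homomorphism Φ from ℤ² to the group of order automorphisms of (E, E₊) such that for all (r, x, y) ∈ E the first component of Φ(1,0)(r, x, y) equals 5r and the first component of Φ(0,1)(r, x, y) equals (2 + √3)r. -/

import Mathlib

/-- The additive subgroup `E` of `ℝ × ℤ × ℤ`: all triples `(r, x, y)` such that
`r = (j + k√3)/5^(6i)`, `x ≡ j (mod 9)` and `y ≡ k (mod 3)` for some integers `i, j, k`. -/
def Eset : Set (ℝ × ℤ × ℤ) :=
  {p | ∃ i j k : ℤ, p.1 = ((j : ℝ) + (k : ℝ) * Real.sqrt 3) / (5 : ℝ) ^ (6 * i) ∧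
    p.2.1 ≡ j [ZMOD 9] ∧ p.2.2 ≡ k [ZMOD 3]}

/-- The positive cone `E₊ = {(r, x, y) ∈ E : r > 0} ∪ {(0, 0, 0)}`. -/
def Epos : Set (ℝ × ℤ × ℤ) :=
  {p | p ∈ Eset ∧ 0 < p.1} ∪ {0}

/-- An order automorphism of `(E, E₊)`: an additive group automorphism of `E`
(a bijection of `E` onto itself which is additive on `E`) with `φ(E₊) = E₊`. -/
structure IsOrderAuto (φ : ℝ × ℤ × ℤ → ℝ × ℤ × ℤ) : Prop where
  bijOn : Set.BijOn φ Eset Eset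
  addOn : ∀ p ∈ Eset, ∀ q ∈ Eset, φ (p + q) = φ p + φ q
  posEq : φ '' Epos = Epos

section helpers

lemma irr3 : Irrational (Real.sqrt 3) := by
  have : (3:ℝ) = ((3:ℕ):ℝ) := by norm_num
  rw [this]
  exact (Nat.prime_three).irrational_sqrt

lemma indep {a b a' b' : ℤ} (h : (a:ℝ) + b * Real.sqrt 3 = a' + b' * Real.sqrt 3) :
    a = a' ∧ b = b' := by
  by_cases hb : b = b'
  · subst hb
    constructor
    · exact_mod_cast add_right_cancel h
    · rfl
  · exfalso
    have hbb : ((b - b' : ℤ):ℝ) ≠ 0 := by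
      simpa using sub_ne_zero.mpr (by exact_mod_cast hb)
    have : Real.sqrt 3 = ((a' - a : ℤ):ℝ) / ((b - b' : ℤ):ℝ) := by
      rw [eq_div_iff hbb]
      push_cast
      linear_combination h
    have : Real.sqrt 3 = (((a' - a : ℤ) / (b - b' : ℤ) : ℚ) : ℝ) := by
      rw [this]; push_cast; ring
    exact irr3.ne_rat _ this

lemma uniq_aux {i i' j k j' k' : ℤ} (hle : i ≤ i')
    (h : ((j : ℝ) + k * Real.sqrt 3) / (5:ℝ) ^ (6*i) = ((j' : ℝ) + k' * Real.sqrt 3) / (5:ℝ) ^ (6*i')) :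
    j' ≡ j [ZMOD 9] ∧ k' ≡ k [ZMOD 3] := by
  set m : ℕ := (i' - i).toNat with hm
  have him : i' = i + m := by omega
  have h5 : ((5:ℝ) ^ (6*i)) ≠ 0 := by positivity
  have h5' : ((5:ℝ) ^ (6*i')) ≠ 0 := by positivity
  have key : ((j:ℝ) + k * Real.sqrt 3) * ((5^(6*m) : ℤ) : ℝ) = (j':ℝ) + k' * Real.sqrt 3 := by
    have e : (5:ℝ) ^ (6*i') = (5:ℝ) ^ (6*i) * ((5^(6*m) : ℤ) : ℝ) := by
      rw [him, mul_add, zpow_add₀ (by norm_num : (5:ℝ) ≠ 0)]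
      push_cast
      rw [← zpow_natCast (5:ℝ) (6*m)]
      norm_num
    rw [div_eq_div_iff h5 h5'] at h
    rw [e] at h
    have := mul_left_cancel₀ h5 (by linarith [h] :
      (5:ℝ)^(6*i) * (((j:ℝ) + k*Real.sqrt 3) * ((5^(6*m):ℤ):ℝ)) =
      (5:ℝ)^(6*i) * ((j':ℝ) + k'*Real.sqrt 3))
    exact this
  have key2 : ((j * 5^(6*m) : ℤ):ℝ) + ((k * 5^(6*m) : ℤ):ℝ) * Real.sqrt 3 = (j':ℝ) + k' * Real.sqrt 3 := by
    push_cast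
    push_cast at key
    linarith [key]
  obtain ⟨hj, hk⟩ := indep key2
  have h9 : (5:ℤ)^(6*m) ≡ 1 [ZMOD 9] := by
    have e : (5:ℤ)^(6*m) = (5^6)^m := by rw [← pow_mul]
    rw [e]
    calc ((5:ℤ)^6)^m ≡ 1^m [ZMOD 9] := (Int.ModEq.pow m (by decide))
      _ = 1 := one_pow m
  have h3 : (5:ℤ)^(6*m) ≡ 1 [ZMOD 3] := by
    have e : (5:ℤ)^(6*m) = (5^6)^m := by rw [← pow_mul]
    rw [e]
    calc ((5:ℤ)^6)^m ≡ 1^m [ZMOD 3] := (Int.ModEq.pow m (by decide))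
      _ = 1 := one_pow m
  constructor
  · rw [← hj]
    calc j * 5^(6*m) ≡ j * 1 [ZMOD 9] := (Int.ModEq.refl j).mul h9
      _ = j := mul_one j
  · rw [← hk]
    calc k * 5^(6*m) ≡ k * 1 [ZMOD 3] := (Int.ModEq.refl k).mul h3
      _ = k := mul_one k

lemma uniq {i i' j k j' k' : ℤ}
    (h : ((j : ℝ) + k * Real.sqrt 3) / (5:ℝ) ^ (6*i) = ((j' : ℝ) + k' * Real.sqrt 3) / (5:ℝ) ^ (6*i')) :
    j' ≡ j [ZMOD 9] ∧ k' ≡ k [ZMOD 3] := by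
  rcases le_total i i' with hle | hle
  · exact uniq_aux hle h
  · obtain ⟨h1, h2⟩ := uniq_aux hle h.symm
    exact ⟨h1.symm, h2.symm⟩

def HasRep (p : ℝ × ℤ × ℤ) (i : ℤ) : Prop :=
  ∃ j k : ℤ, p.1 = ((j : ℝ) + (k : ℝ) * Real.sqrt 3) / (5 : ℝ) ^ (6 * i) ∧
    p.2.1 ≡ j [ZMOD 9] ∧ p.2.2 ≡ k [ZMOD 3]

lemma hasRep_succ {p : ℝ × ℤ × ℤ} {i : ℤ} (h : HasRep p i) : HasRep p (i + 1) := by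
  obtain ⟨j, k, h1, h2, h3⟩ := h
  refine ⟨j * 5^6, k * 5^6, ?_, ?_, ?_⟩
  · rw [h1]
    rw [mul_add, mul_one, zpow_add₀ (by norm_num : (5:ℝ) ≠ 0)]
    push_cast
    rw [div_mul_eq_div_div_swap]
    congr 1
    rw [eq_div_iff (by positivity : ((5:ℝ)^(6:ℤ)) ≠ 0)]
    norm_num
    ring
  · calc p.2.1 ≡ j [ZMOD 9] := h2
      _ ≡ j * 5^6 [ZMOD 9] := by
        calc j = j * 1 := (mul_one j).symm
          _ ≡ j * 5^6 [ZMOD 9] := (Int.ModEq.refl j).mul (by decide)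
  · calc p.2.2 ≡ k [ZMOD 3] := h3
      _ ≡ k * 5^6 [ZMOD 3] := by
        calc k = k * 1 := (mul_one k).symm
          _ ≡ k * 5^6 [ZMOD 3] := (Int.ModEq.refl k).mul (by decide)

lemma hasRep_mono {p : ℝ × ℤ × ℤ} {i i' : ℤ} (h : HasRep p i) (hle : i ≤ i') : HasRep p i' := by
  have key : ∀ n : ℕ, HasRep p (i + n) := by
    intro n
    induction n with
    | zero => simpa using h
    | succ n ih =>
      have h2 := hasRep_succ ih
      have e : i + ((n:ℤ)+1) = (i + n) + 1 := by ring
      push_cast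
      rw [e]
      exact h2
  have := key (i' - i).toNat
  have he : i + ((i' - i).toNat : ℤ) = i' := by omega
  rwa [he] at this

lemma Eset_zero : (0 : ℝ × ℤ × ℤ) ∈ Eset := by
  refine ⟨0, 0, 0, ?_, ?_, ?_⟩ <;> simp [Int.ModEq]

lemma Eset_add {p q : ℝ × ℤ × ℤ} (hp : p ∈ Eset) (hq : q ∈ Eset) : p + q ∈ Eset := by
  obtain ⟨i, hpi⟩ := hp
  obtain ⟨i', hqi⟩ := hq
  obtain ⟨j, k, h1, h2, h3⟩ := hasRep_mono hpi (le_max_left i i')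
  obtain ⟨j', k', g1, g2, g3⟩ := hasRep_mono hqi (le_max_right i i')
  refine ⟨max i i', j + j', k + k', ?_, ?_, ?_⟩
  · show p.1 + q.1 = _
    rw [h1, g1, ← add_div]
    push_cast
    ring_nf
  · exact h2.add g2
  · exact h3.add g3

lemma Eset_neg {p : ℝ × ℤ × ℤ} (hp : p ∈ Eset) : -p ∈ Eset := by
  obtain ⟨i, j, k, h1, h2, h3⟩ := hp
  refine ⟨i, -j, -k, ?_, h2.neg, h3.neg⟩
  show -p.1 = _
  rw [h1]
  push_cast
  ring

lemma Eset_zsmul {p : ℝ × ℤ × ℤ} (hp : p ∈ Eset) (n : ℤ) : n • p ∈ Eset := by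
  obtain ⟨i, j, k, h1, h2, h3⟩ := hp
  refine ⟨i, n * j, n * k, ?_, ?_, ?_⟩
  · show (n • p).1 = _
    rw [Prod.smul_fst, zsmul_eq_mul, h1]
    push_cast
    ring
  · show (n • p).2.1 ≡ _ [ZMOD 9]
    rw [Prod.smul_snd, Prod.smul_fst, smul_eq_mul]
    exact (Int.ModEq.refl n).mul h2
  · show (n • p).2.2 ≡ _ [ZMOD 3]
    rw [Prod.smul_snd, Prod.smul_snd, smul_eq_mul]
    exact (Int.ModEq.refl n).mul h3

/-- the transfer lemma: multiplication by `u + v√3` on first components acts as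
an explicit matrix on the congruence data. -/
lemma transfer {p q : ℝ × ℤ × ℤ} (hp : p ∈ Eset) (hq : q ∈ Eset) (u v : ℤ)
    (h : q.1 = ((u:ℝ) + (v:ℝ) * Real.sqrt 3) * p.1) :
    q.2.1 ≡ u * p.2.1 + 3 * v * p.2.2 [ZMOD 9] ∧ q.2.2 ≡ v * p.2.1 + u * p.2.2 [ZMOD 3] := by
  obtain ⟨i, j, k, h1, h2, h3⟩ := hp
  obtain ⟨i', j', k', g1, g2, g3⟩ := hq
  have hs : Real.sqrt 3 * Real.sqrt 3 = 3 := Real.mul_self_sqrt (by norm_num)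
  have num : ((u*j + 3*v*k : ℤ):ℝ) + ((v*j + u*k : ℤ):ℝ) * Real.sqrt 3
      = ((u:ℝ) + (v:ℝ) * Real.sqrt 3) * ((j:ℝ) + (k:ℝ) * Real.sqrt 3) := by
    push_cast
    linear_combination (-(v:ℝ) * (k:ℝ)) * hs
  have key : (((u*j + 3*v*k : ℤ):ℝ) + ((v*j + u*k : ℤ):ℝ) * Real.sqrt 3) / (5:ℝ)^(6*i)
      = ((j' : ℝ) + (k':ℝ) * Real.sqrt 3) / (5:ℝ)^(6*i') := by
    rw [num, ← g1, h, h1, mul_div_assoc]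
  obtain ⟨hj', hk'⟩ := uniq key
  constructor
  · calc q.2.1 ≡ j' [ZMOD 9] := g2
      _ ≡ u*j + 3*v*k [ZMOD 9] := hj'
      _ ≡ u * p.2.1 + 3 * v * p.2.2 [ZMOD 9] := by
        apply Int.ModEq.add
        · exact (h2.symm).mul_left u
        · have step : (3:ℤ)*k ≡ 3*p.2.2 [ZMOD 9] := by
            have := (h3.symm).mul_left' (c := 3)
            norm_num at this
            exact this
          calc (3:ℤ)*v*k = v*(3*k) := by ring
            _ ≡ v*(3*p.2.2) [ZMOD 9] := step.mul_left v
            _ = 3*v*p.2.2 := by ring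
  · calc q.2.2 ≡ k' [ZMOD 3] := g3
      _ ≡ v*j + u*k [ZMOD 3] := hk'
      _ ≡ v * p.2.1 + u * p.2.2 [ZMOD 3] := by
        apply Int.ModEq.add
        · exact ((h2.symm).of_dvd (by norm_num)).mul_left v
        · exact (h3.symm).mul_left u

end helpers

section additive
variable {φ : ℝ × ℤ × ℤ → ℝ × ℤ × ℤ}
  (hadd : ∀ p ∈ Eset, ∀ q ∈ Eset, φ (p + q) = φ p + φ q)
include hadd

lemma mapZeroE : φ 0 = 0 := by
  have := hadd 0 Eset_zero 0 Eset_zero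
  rw [add_zero] at this
  exact left_eq_add.mp this

lemma mapNegE {p : ℝ × ℤ × ℤ} (hp : p ∈ Eset) : φ (-p) = -φ p := by
  have := hadd p hp (-p) (Eset_neg hp)
  rw [add_neg_cancel, mapZeroE hadd] at this
  exact (neg_eq_of_add_eq_zero_right this.symm).symm

lemma mapZsmulE {p : ℝ × ℤ × ℤ} (hp : p ∈ Eset) (n : ℤ) : φ (n • p) = n • φ p := by
  have hnat : ∀ m : ℕ, φ ((m:ℤ) • p) = (m:ℤ) • φ p := by
    intro m
    induction m with
    | zero => simpa using mapZeroE hadd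
    | succ m ih =>
      have e : (((m:ℕ)+1 : ℤ)) • p = (m:ℤ) • p + p := by
        rw [add_smul, one_smul]
      push_cast
      rw [e, hadd _ (Eset_zsmul hp m) p hp, ih, add_smul, one_smul]
  obtain ⟨m, rfl | rfl⟩ := n.eq_nat_or_neg
  · exact hnat m
  · rw [neg_smul, neg_smul, ← hnat m]
    exact mapNegE hadd (Eset_zsmul hp m)

end additive

lemma five_pow_dvd_zero {m : ℤ} (h : ∀ n : ℕ, (5:ℤ)^n ∣ m) : m = 0 := by
  by_contra hm
  have habs : 0 < |m| := abs_pos.mpr hm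
  have hd : (5:ℤ)^m.natAbs ∣ |m| := (dvd_abs _ _).mpr (h _)
  have hle : (5:ℤ)^m.natAbs ≤ |m| := Int.le_of_dvd habs hd
  have hlt : (m.natAbs : ℤ) < (5:ℤ)^m.natAbs := by
    have := Nat.lt_pow_self (n := m.natAbs) (by norm_num : 1 < 5)
    exact_mod_cast this
  rw [Int.abs_eq_natAbs] at hle
  omega

/-- elements of `Eset` with zero integer part are divisible by all powers of 5. -/
lemma pure_div {p : ℝ × ℤ × ℤ} (hp : p ∈ Eset) (h0 : p.2 = 0) (n : ℕ) :
    ∃ e ∈ Eset, p = ((5:ℤ)^n) • e := by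
  obtain ⟨i, j, k, h1, h2, h3⟩ := hp
  have hx : p.2.1 = 0 := by rw [h0]; rfl
  have hy : p.2.2 = 0 := by rw [h0]; rfl
  refine ⟨(p.1 / 5^n, 0, 0), ⟨i + n, j * 5^(5*n), k * 5^(5*n), ?_, ?_, ?_⟩, ?_⟩
  · show p.1 / 5^n = _
    rw [h1]
    have e1 : (5:ℝ)^(6*(i+(n:ℤ))) = 5^(6*i) * ((5:ℝ)^((n:ℤ)) * (5:ℝ)^(5*(n:ℤ))) := by
      rw [← zpow_add₀ (by norm_num : (5:ℝ) ≠ 0), ← zpow_add₀ (by norm_num : (5:ℝ) ≠ 0)]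
      congr 1
      ring
    have hc : ((j * 5^(5*n) : ℤ):ℝ) + ((k * 5^(5*n) : ℤ):ℝ) * Real.sqrt 3
        = (((j:ℝ) + (k:ℝ)*Real.sqrt 3) * (5:ℝ)^(5*(n:ℤ))) := by
      push_cast
      rw [show ((5:ℤ)*(n:ℤ)) = ((5*n : ℕ) : ℤ) by push_cast; ring, zpow_natCast]
      push_cast
      ring
    rw [hc, e1]
    rw [← zpow_natCast (5:ℝ) n]
    have h5a : (5:ℝ)^(6*i) ≠ 0 := by positivity
    have h5b : (5:ℝ)^((n:ℤ)) ≠ 0 := by positivity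
    have h5c : (5:ℝ)^(5*(n:ℤ)) ≠ 0 := by positivity
    field_simp
  · show (0:ℤ) ≡ _ [ZMOD 9]
    have : (0:ℤ) ≡ j [ZMOD 9] := hx ▸ h2
    calc (0:ℤ) = 0 * 5^(5*n) := by ring
      _ ≡ j * 5^(5*n) [ZMOD 9] := this.mul_right _
  · show (0:ℤ) ≡ _ [ZMOD 3]
    have : (0:ℤ) ≡ k [ZMOD 3] := hy ▸ h3
    calc (0:ℤ) = 0 * 5^(5*n) := by ring
      _ ≡ k * 5^(5*n) [ZMOD 3] := this.mul_right _
  · ext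
    · show p.1 = ((5:ℤ)^n) • (p.1 / 5^n)
      rw [zsmul_eq_mul]
      push_cast
      field_simp
    · show p.2.1 = ((5:ℤ)^n) • (0:ℤ)
      simp [hx]
    · show p.2.2 = ((5:ℤ)^n) • (0:ℤ)
      simp [hy]

noncomputable def Pt : ℝ × ℤ × ℤ := (1, 1, 0)
noncomputable def Qt : ℝ × ℤ × ℤ := (Real.sqrt 3, 0, 1)

lemma Pt_mem : Pt ∈ Eset := by
  refine ⟨0, 1, 0, ?_, ?_, ?_⟩
  · show (1:ℝ) = _
    norm_num
  · decide
  · decide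

lemma Qt_mem : Qt ∈ Eset := by
  refine ⟨0, 0, 1, ?_, ?_, ?_⟩
  · show Real.sqrt 3 = _
    norm_num
  · decide
  · decide

/-- linearity of the integer part of an additive self-map of `E`. -/
lemma lin {φ : ℝ × ℤ × ℤ → ℝ × ℤ × ℤ}
    (hadd : ∀ p ∈ Eset, ∀ q ∈ Eset, φ (p + q) = φ p + φ q)
    (hmaps : Set.MapsTo φ Eset Eset) {p : ℝ × ℤ × ℤ} (hp : p ∈ Eset) :
    (φ p).2.1 = p.2.1 * (φ Pt).2.1 + p.2.2 * (φ Qt).2.1 ∧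
    (φ p).2.2 = p.2.1 * (φ Pt).2.2 + p.2.2 * (φ Qt).2.2 := by
  set x := p.2.1 with hx
  set y := p.2.2 with hy
  set d : ℝ × ℤ × ℤ := p + -(x • Pt) + -(y • Qt) with hd
  have hxP : x • Pt ∈ Eset := Eset_zsmul Pt_mem x
  have hyQ : y • Qt ∈ Eset := Eset_zsmul Qt_mem y
  have hdE : d ∈ Eset := Eset_add (Eset_add hp (Eset_neg hxP)) (Eset_neg hyQ)
  have hd2 : d.2 = 0 := by
    have : d.2 = (x + -(x * 1) + -(y * 0), y + -(x * 0) + -(y * 1)) := rfl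
    rw [this]
    simp
  -- φ d has zero integer part
  have hφd : (φ d).2.1 = 0 ∧ (φ d).2.2 = 0 := by
    have key : ∀ n : ℕ, (5:ℤ)^n ∣ (φ d).2.1 ∧ (5:ℤ)^n ∣ (φ d).2.2 := by
      intro n
      obtain ⟨e, heE, hde⟩ := pure_div hdE hd2 n
      have : φ d = ((5:ℤ)^n) • φ e := by
        rw [hde, mapZsmulE hadd heE]
      constructor
      · exact ⟨(φ e).2.1, by rw [this]; simp [smul_eq_mul]⟩
      · exact ⟨(φ e).2.2, by rw [this]; simp [smul_eq_mul]⟩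
    exact ⟨five_pow_dvd_zero (fun n => (key n).1), five_pow_dvd_zero (fun n => (key n).2)⟩
  have hdecomp : p = d + (x • Pt + y • Qt) := by
    rw [hd]; abel
  have hsplit : φ p = φ d + (x • φ Pt + y • φ Qt) := by
    rw [hdecomp]
    rw [hadd d hdE _ (Eset_add hxP hyQ)]
    rw [hadd _ hxP _ hyQ]
    rw [mapZsmulE hadd Pt_mem, mapZsmulE hadd Qt_mem]
  constructor
  · have : (φ p).2.1 = (φ d).2.1 + (x * (φ Pt).2.1 + y * (φ Qt).2.1) := by
      rw [hsplit]; rfl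
    rw [this, hφd.1, zero_add]
  · have : (φ p).2.2 = (φ d).2.2 + (x * (φ Pt).2.2 + y * (φ Qt).2.2) := by
      rw [hsplit]; rfl
    rw [this, hφd.2, zero_add]

/-- There is no group homomorphism `Φ` from `ℤ²` to the group of order automorphisms of
`(E, E₊)` (automorphisms under composition, as maps of `E`) such that the first component
of `Φ(1,0)` scales by `5` and the first component of `Φ(0,1)` scales by `2 + √3`. -/
theorem stmt_15 :
    ¬ ∃ Φ : ℤ × ℤ → (ℝ × ℤ × ℤ → ℝ × ℤ × ℤ),
      (∀ v, IsOrderAuto (Φ v)) ∧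
      (∀ p ∈ Eset, Φ 0 p = p) ∧
      (∀ v w, ∀ p ∈ Eset, Φ (v + w) p = Φ v (Φ w p)) ∧
      (∀ p ∈ Eset, (Φ (1, 0) p).1 = 5 * p.1) ∧
      (∀ p ∈ Eset, (Φ (0, 1) p).1 = (2 + Real.sqrt 3) * p.1) := by
  rintro ⟨Φ, hauto, hid, hcomp, hA5, hB23⟩
  have haddα := (hauto (1,0)).addOn
  have hmapα := (hauto (1,0)).bijOn.mapsTo
  have haddβ := (hauto (0,1)).addOn
  have hmapβ := (hauto (0,1)).bijOn.mapsTo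
  have haddα' := (hauto (-1,0)).addOn
  have hmapα' := (hauto (-1,0)).bijOn.mapsTo
  have haddβ' := (hauto (0,-1)).addOn
  have hmapβ' := (hauto (0,-1)).bijOn.mapsTo
  -- integer matrix entries
  set a11 := (Φ (1,0) Pt).2.1 with ha11
  set a21 := (Φ (1,0) Pt).2.2 with ha21
  set a12 := (Φ (1,0) Qt).2.1 with ha12
  set a22 := (Φ (1,0) Qt).2.2 with ha22
  set c11 := (Φ (0,1) Pt).2.1 with hc11
  set c21 := (Φ (0,1) Pt).2.2 with hc21
  set c12 := (Φ (0,1) Qt).2.1 with hc12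
  set c22 := (Φ (0,1) Qt).2.2 with hc22
  set b11 := (Φ (-1,0) Pt).2.1 with hb11
  set b21 := (Φ (-1,0) Pt).2.2 with hb21
  set b12 := (Φ (-1,0) Qt).2.1 with hb12
  set b22 := (Φ (-1,0) Qt).2.2 with hb22
  set d11 := (Φ (0,-1) Pt).2.1 with hd11
  set d21 := (Φ (0,-1) Pt).2.2 with hd21
  set d12 := (Φ (0,-1) Qt).2.1 with hd12
  set d22 := (Φ (0,-1) Qt).2.2 with hd22
  -- congruences from the transfer lemma
  have tαP := transfer Pt_mem (hmapα Pt_mem) 5 0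
    (by rw [hA5 Pt Pt_mem]; push_cast; ring)
  have tαQ := transfer Qt_mem (hmapα Qt_mem) 5 0
    (by rw [hA5 Qt Qt_mem]; push_cast; ring)
  have tβP := transfer Pt_mem (hmapβ Pt_mem) 2 1
    (by rw [hB23 Pt Pt_mem]; push_cast; ring)
  have tβQ := transfer Qt_mem (hmapβ Qt_mem) 2 1
    (by rw [hB23 Qt Qt_mem]; push_cast; ring)
  have hP1 : Pt.2.1 = 1 := rfl
  have hP2 : Pt.2.2 = 0 := rfl
  have hQ1 : Qt.2.1 = 0 := rfl
  have hQ2 : Qt.2.2 = 1 := rfl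
  rw [hP1, hP2] at tαP tβP
  rw [hQ1, hQ2] at tαQ tβQ
  norm_num at tαP tαQ tβP tβQ
  -- tαP.1 : a11 ≡ 5 [ZMOD 9],  tαQ : a12 ≡ 0 [ZMOD 9] ∧ a22 ≡ 5 [ZMOD 3]
  -- tβP : c11 ≡ 2 [ZMOD 9] ∧ c21 ≡ 1 [ZMOD 3], tβQ : c12 ≡ 3 [ZMOD 9] ∧ c22 ≡ 2 [ZMOD 3]
  obtain ⟨t1, ht1⟩ : ∃ t, a11 = 5 + 9*t := by
    obtain ⟨c, hc⟩ := tαP.1.dvd; exact ⟨-c, by omega⟩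
  obtain ⟨t2, ht2⟩ : ∃ t, a12 = 9*t := by
    obtain ⟨c, hc⟩ := tαQ.1.dvd; exact ⟨-c, by omega⟩
  obtain ⟨t3, ht3⟩ : ∃ t, a22 = 5 + 3*t := by
    obtain ⟨c, hc⟩ := tαQ.2.dvd; exact ⟨-c, by omega⟩
  obtain ⟨t4, ht4⟩ : ∃ t, c11 = 2 + 9*t := by
    obtain ⟨c, hc⟩ := tβP.1.dvd; exact ⟨-c, by omega⟩
  obtain ⟨t5, ht5⟩ : ∃ t, c12 = 3 + 9*t := by
    obtain ⟨c, hc⟩ := tβQ.1.dvd; exact ⟨-c, by omega⟩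
  obtain ⟨t6, ht6⟩ : ∃ t, c21 = 1 + 3*t := by
    obtain ⟨c, hc⟩ := tβP.2.dvd; exact ⟨-c, by omega⟩
  obtain ⟨t7, ht7⟩ : ∃ t, c22 = 2 + 3*t := by
    obtain ⟨c, hc⟩ := tβQ.2.dvd; exact ⟨-c, by omega⟩
  -- inverse relations
  have hinvP : Φ (-1,0) (Φ (1,0) Pt) = Pt := by
    have h1 := hcomp (-1,0) (1,0) Pt Pt_mem
    have h0 : ((-1,0) : ℤ×ℤ) + (1,0) = 0 := by norm_num [Prod.ext_iff]
    rw [h0, hid Pt Pt_mem] at h1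
    exact h1.symm
  have hinvQ : Φ (-1,0) (Φ (1,0) Qt) = Qt := by
    have h1 := hcomp (-1,0) (1,0) Qt Qt_mem
    have h0 : ((-1,0) : ℤ×ℤ) + (1,0) = 0 := by norm_num [Prod.ext_iff]
    rw [h0, hid Qt Qt_mem] at h1
    exact h1.symm
  have hinvP' : Φ (0,-1) (Φ (0,1) Pt) = Pt := by
    have h1 := hcomp (0,-1) (0,1) Pt Pt_mem
    have h0 : ((0,-1) : ℤ×ℤ) + (0,1) = 0 := by norm_num [Prod.ext_iff]
    rw [h0, hid Pt Pt_mem] at h1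
    exact h1.symm
  have hinvQ' : Φ (0,-1) (Φ (0,1) Qt) = Qt := by
    have h1 := hcomp (0,-1) (0,1) Qt Qt_mem
    have h0 : ((0,-1) : ℤ×ℤ) + (0,1) = 0 := by norm_num [Prod.ext_iff]
    rw [h0, hid Qt Qt_mem] at h1
    exact h1.symm
  -- determinant equations via linearity of the inverse
  have e1 := (lin haddα' hmapα' (hmapα Pt_mem)).1
  have e2 := (lin haddα' hmapα' (hmapα Pt_mem)).2
  have e3 := (lin haddα' hmapα' (hmapα Qt_mem)).1
  have e4 := (lin haddα' hmapα' (hmapα Qt_mem)).2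
  rw [hinvP] at e1 e2
  rw [hinvQ] at e3 e4
  rw [hP1] at e1
  rw [hP2] at e2
  rw [hQ1] at e3
  rw [hQ2] at e4
  -- e1 : 1 = a11 * b11 + a21 * b12, etc.
  have f1 := (lin haddβ' hmapβ' (hmapβ Pt_mem)).1
  have f2 := (lin haddβ' hmapβ' (hmapβ Pt_mem)).2
  have f3 := (lin haddβ' hmapβ' (hmapβ Qt_mem)).1
  have f4 := (lin haddβ' hmapβ' (hmapβ Qt_mem)).2
  rw [hinvP'] at f1 f2
  rw [hinvQ'] at f3 f4
  rw [hP1] at f1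
  rw [hP2] at f2
  rw [hQ1] at f3
  rw [hQ2] at f4
  have hDA : (a11*a22 - a12*a21) * (b11*b22 - b12*b21) = 1 := by
    linear_combination (-(a12*b21 + a22*b22)) * e1 - e4 + (a11*b21 + a21*b22) * e3
  have hDC : (c11*c22 - c12*c21) * (d11*d22 - d12*d21) = 1 := by
    linear_combination (-(c12*d21 + c22*d22)) * f1 - f4 + (c11*d21 + c21*d22) * f3
  have detA := Int.eq_one_or_neg_one_of_mul_eq_one hDA
  have detC := Int.eq_one_or_neg_one_of_mul_eq_one hDC
  -- commutation
  have hcommP : Φ (1,0) (Φ (0,1) Pt) = Φ (0,1) (Φ (1,0) Pt) := by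
    have h1 := hcomp (1,0) (0,1) Pt Pt_mem
    have h2 := hcomp (0,1) (1,0) Pt Pt_mem
    have h0 : ((1,0) : ℤ×ℤ) + (0,1) = ((0,1) : ℤ×ℤ) + (1,0) := by norm_num [Prod.ext_iff]
    rw [h0, h2] at h1
    exact h1.symm
  have g1 := (lin haddα hmapα (hmapβ Pt_mem)).2
  have g2 := (lin haddβ hmapβ (hmapα Pt_mem)).2
  rw [hcommP] at g1
  have comm : c11 * a21 + c21 * a22 = a11 * c21 + a21 * c22 := by
    rw [g1] at g2
    linarith [g2]
  -- pass to ZMod 9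
  have h9 : (9 : ZMod 9) = 0 := by decide
  have key1 : ∀ T : ZMod 9, 5*(5+3*T) = 1 → 3*T = 6 := by decide
  have key1' : ∀ T : ZMod 9, 5*(5+3*T) = -1 → False := by decide
  have key2 : ∀ S U : ZMod 9, 2*(2+3*S) - 3*(1+3*U) = 1 → 3*S = 0 := by decide
  have key2' : ∀ S U : ZMod 9, 2*(2+3*S) - 3*(1+3*U) = -1 → False := by decide
  have key3 : ∀ A U : ZMod 9, 2*A + (1+3*U)*2 = 5*(1+3*U) + A*2 → False := by decide
  have hz22 : ((a22 : ℤ) : ZMod 9) = 2 := by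
    have h63 : (3:ZMod 9) * (t3:ZMod 9) = 6 := by
      rcases detA with hd | hd
      · rw [ht1, ht2, ht3] at hd
        have H := congrArg (fun z : ℤ => (z : ZMod 9)) hd
        push_cast at H
        refine key1 (t3:ZMod 9) ?_
        linear_combination H + ((t2:ZMod 9)*((a21:ℤ):ZMod 9) - (t1:ZMod 9)*(5+3*(t3:ZMod 9))) * h9
      · rw [ht1, ht2, ht3] at hd
        have H := congrArg (fun z : ℤ => (z : ZMod 9)) hd
        push_cast at H
        refine (key1' (t3:ZMod 9) ?_).elim
        linear_combination H + ((t2:ZMod 9)*((a21:ℤ):ZMod 9) - (t1:ZMod 9)*(5+3*(t3:ZMod 9))) * h9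
    rw [ht3]
    push_cast
    linear_combination h63 + h9
  have hzc22 : ((c22 : ℤ) : ZMod 9) = 2 := by
    have h70 : (3:ZMod 9) * (t7:ZMod 9) = 0 := by
      rcases detC with hd | hd
      · rw [ht4, ht5, ht6, ht7] at hd
        have H := congrArg (fun z : ℤ => (z : ZMod 9)) hd
        push_cast at H
        refine key2 (t7:ZMod 9) (t6:ZMod 9) ?_
        linear_combination H + ((t5:ZMod 9)*(1+3*(t6:ZMod 9)) - (t4:ZMod 9)*(2+3*(t7:ZMod 9))) * h9
      · rw [ht4, ht5, ht6, ht7] at hd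
        have H := congrArg (fun z : ℤ => (z : ZMod 9)) hd
        push_cast at H
        refine (key2' (t7:ZMod 9) (t6:ZMod 9) ?_).elim
        linear_combination H + ((t5:ZMod 9)*(1+3*(t6:ZMod 9)) - (t4:ZMod 9)*(2+3*(t7:ZMod 9))) * h9
    rw [ht7]
    push_cast
    linear_combination h70
  -- final contradiction
  have hz11 : ((a11 : ℤ) : ZMod 9) = 5 := by
    rw [ht1]; push_cast; linear_combination (t1:ZMod 9) * h9
  have hzc11 : ((c11 : ℤ) : ZMod 9) = 2 := by
    rw [ht4]; push_cast; linear_combination (t4:ZMod 9) * h9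
  have hzc21 : ((c21 : ℤ) : ZMod 9) = 1 + 3*(t6:ZMod 9) := by
    rw [ht6]; push_cast; ring
  have H := congrArg (fun z : ℤ => (z : ZMod 9)) comm
  push_cast at H
  rw [hz11, hzc11, hzc21, hz22, hzc22] at H
  exact key3 _ _ (by linear_combination H)
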